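/- Assume the Bregman PDMM setup (see context) with the mirror-averaging optimality conditions, primal optimality conditions and dual updates holding at every iteration t ∈ ℕ, parameters satisfying 0 < γ < μσ and τ ≤ ρ(μσ − γ), and a KKT point (x*, ν*) as in the context. Let T ≥ 1, define x̄_i^T = (1/T) Σ_{t=1}^T x_i^t, and V(0) = (1/(2τρ)) Σ_i ‖ν*_i − ν_i^0‖_2² + Σ_i B_φ(x*, y_i^0) + Σ_i (δ_i/ρ) B_{φ_i}(x*, x_i^0). Then (1/2) Σ_{i=1}^m ‖x̄_i^T − Σ_{j=1}^m P_{ij} x̄_j^T‖_2² ≤ V(0)/(γT). -/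

import Mathlib

open scoped RealInnerProductSpace BigOperators

/-- The Bregman divergence `B_φ(u,v) = φ(u) − φ(v) − ⟨∇φ(v), u − v⟩`. -/
noncomputable def breg {n : ℕ} (φ : EuclideanSpace ℝ (Fin n) → ℝ)
    (u v : EuclideanSpace ℝ (Fin n)) : ℝ :=
  φ u - φ v - ⟪gradient φ v, u - v⟫

/-- The ℓ_p norm on ℝ^n: `‖w‖_p = (Σ_k |w_k|^p)^(1/p)`. -/
noncomputable def lpnorm {n : ℕ} (p : ℝ) (w : EuclideanSpace ℝ (Fin n)) : ℝ :=
  (∑ k, |w k| ^ p) ^ (1 / p)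


lemma grad_ineq {n : ℕ} {f : EuclideanSpace ℝ (Fin n) → ℝ}
    (hc : ConvexOn ℝ Set.univ f) (hd : Differentiable ℝ f)
    (u v : EuclideanSpace ℝ (Fin n)) :
    f v + ⟪gradient f v, u - v⟫ ≤ f u := by
  have hg : HasGradientAt f (gradient f v) v := (hd v).hasGradientAt
  have hf' : HasFDerivAt f ((InnerProductSpace.toDual ℝ (EuclideanSpace ℝ (Fin n))) (gradient f v) : EuclideanSpace ℝ (Fin n) →L[ℝ] ℝ) v :=
    hasGradientAt_iff_hasFDerivAt.mp hg
  set c : ℝ → EuclideanSpace ℝ (Fin n) := fun t => t • (u - v) + v with hc_def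
  have hcd : HasDerivAt c (u - v) 0 := by
    have h := ((hasDerivAt_id (0:ℝ)).smul_const (u - v)).add_const v
    rw [one_smul] at h
    exact h
  have hc0 : c 0 = v := by simp [hc_def]
  have hcomp : HasDerivAt (f ∘ c) (⟪gradient f v, u - v⟫) 0 := by
    have h2 : HasFDerivAt f ((InnerProductSpace.toDual ℝ (EuclideanSpace ℝ (Fin n))) (gradient f v) : EuclideanSpace ℝ (Fin n) →L[ℝ] ℝ) (c 0) := by
      rw [hc0]; exact hf'
    have := h2.comp_hasDerivAt (0:ℝ) hcd
    simpa [InnerProductSpace.toDual_apply_apply] using this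
  have hcv : ConvexOn ℝ Set.univ (f ∘ c) := by
    have := hc.comp_affineMap (AffineMap.lineMap v u : ℝ →ᵃ[ℝ] EuclideanSpace ℝ (Fin n))
    have hline : ∀ t : ℝ, (AffineMap.lineMap v u : ℝ →ᵃ[ℝ] EuclideanSpace ℝ (Fin n)) t = c t := by
      intro t; simp [AffineMap.lineMap_apply, hc_def]
    have hfun : (⇑(AffineMap.lineMap v u : ℝ →ᵃ[ℝ] EuclideanSpace ℝ (Fin n))) = c := funext hline
    rw [hfun, Set.preimage_univ] at this
    exact this
  have hs := hcv.le_slope_of_hasDerivAt (Set.mem_univ (0:ℝ)) (Set.mem_univ (1:ℝ))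
    zero_lt_one hcomp
  rw [slope_def_field] at hs
  have h1 : c 1 = u := by simp [hc_def]
  simp only [Function.comp_apply, h1, hc0, sub_zero, div_one] at hs
  linarith

lemma breg_nonneg {n : ℕ} {f : EuclideanSpace ℝ (Fin n) → ℝ}
    (hc : ConvexOn ℝ Set.univ f) (hd : Differentiable ℝ f)
    (u v : EuclideanSpace ℝ (Fin n)) : 0 ≤ breg f u v := by
  have := grad_ineq hc hd u v; simp only [breg]; linarith

lemma breg_three_point {n : ℕ} (φ : EuclideanSpace ℝ (Fin n) → ℝ)
    (a b c : EuclideanSpace ℝ (Fin n)) :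
    breg φ a b + breg φ b c - breg φ a c = ⟪gradient φ c - gradient φ b, a - b⟫ := by
  simp only [breg, inner_sub_left, inner_sub_right]; ring


lemma lp_lower {n : ℕ} {p : ℝ} (hp : 1 ≤ p) (w : EuclideanSpace ℝ (Fin n)) :
    min 1 ((n:ℝ) ^ (2/p - 1)) * ‖w‖^2 ≤ lpnorm p w ^ 2 := by
  have hp0 : 0 < p := lt_of_lt_of_le one_pos hp
  rcases Nat.eq_zero_or_pos n with hn | hn
  · subst hn
    have hw : ‖w‖ = 0 := by
      have : w = 0 := Subsingleton.elim w 0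
      simp [this]
    rw [hw]
    simpa using sq_nonneg (lpnorm p w)
  -- notation
  set Sp : ℝ := ∑ k, |w k| ^ p with hSp
  have hSpnn : 0 ≤ Sp := Finset.sum_nonneg fun k _ =>
    Real.rpow_nonneg (abs_nonneg _) _
  have hnorm : ‖w‖ ^ 2 = ∑ k, w k ^ 2 := by
    rw [EuclideanSpace.norm_eq]
    rw [Real.sq_sqrt (Finset.sum_nonneg fun k _ => sq_nonneg _)]
    congr 1; ext k; rw [Real.norm_eq_abs, sq_abs]
  have hL2 : lpnorm p w ^ 2 = Sp ^ (2/p) := by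
    rw [lpnorm, ← hSp, ← Real.rpow_natCast (Sp ^ (1/p)) 2, ← Real.rpow_mul hSpnn]
    congr 1
    push_cast; ring
  rw [hnorm, hL2]
  rcases le_or_gt p 2 with hp2 | hp2
  · -- case p ≤ 2 : ∑ w k ^ 2 ≤ Sp ^ (2/p)
    have key : ∑ k, w k ^ 2 ≤ Sp ^ (2/p) := by
      set M : ℝ := Sp ^ (1/p) with hM
      have hMnn : 0 ≤ M := Real.rpow_nonneg hSpnn _
      have hMp : M ^ p = Sp := by
        rw [hM, ← Real.rpow_mul hSpnn]
        rw [one_div, inv_mul_cancel₀ (ne_of_gt hp0), Real.rpow_one]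
      have hM2 : M ^ (2:ℝ) = Sp ^ (2/p) := by
        rw [hM, ← Real.rpow_mul hSpnn]
        congr 1; field_simp
      have hterm : ∀ k, w k ^ 2 ≤ |w k| ^ p * M ^ (2 - p) := by
        intro k
        have habs : |w k| ≤ M := by
          have h1 : |w k| ^ p ≤ Sp :=
            Finset.single_le_sum (f := fun k => |w k| ^ p)
              (fun k _ => Real.rpow_nonneg (abs_nonneg _) _) (Finset.mem_univ k)
          calc |w k| = (|w k| ^ p) ^ (1/p) := by
                rw [← Real.rpow_mul (abs_nonneg _), mul_one_div,
                  div_self (ne_of_gt hp0), Real.rpow_one]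
            _ ≤ M := Real.rpow_le_rpow (Real.rpow_nonneg (abs_nonneg _) _) h1
                (by positivity)
        calc w k ^ 2 = |w k| ^ (2:ℝ) := by
              rw [← sq_abs, ← Real.rpow_natCast |w k| 2]; norm_num
          _ = |w k| ^ p * |w k| ^ (2 - p) := by
              rw [← Real.rpow_add' (abs_nonneg _) (by norm_num)]
              norm_num
          _ ≤ |w k| ^ p * M ^ (2 - p) := by
              apply mul_le_mul_of_nonneg_left _ (Real.rpow_nonneg (abs_nonneg _) _)
              exact Real.rpow_le_rpow (abs_nonneg _) habs (by linarith)
      calc ∑ k, w k ^ 2 ≤ ∑ k, |w k| ^ p * M ^ (2 - p) :=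
            Finset.sum_le_sum fun k _ => hterm k
        _ = Sp * M ^ (2 - p) := by rw [← Finset.sum_mul]
        _ = M ^ p * M ^ (2 - p) := by rw [hMp]
        _ = M ^ (2:ℝ) := by
            rw [← Real.rpow_add' hMnn (by norm_num)]; norm_num
        _ = Sp ^ (2/p) := hM2
    have h1 : min 1 ((n:ℝ) ^ (2/p - 1)) ≤ 1 := min_le_left _ _
    have h2 : 0 ≤ ∑ k, w k ^ 2 := Finset.sum_nonneg fun k _ => sq_nonneg _
    nlinarith [key, h2, mul_le_mul_of_nonneg_right h1 h2]
  · -- case 2 < p : Hölder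
    have hconj : Real.HolderConjugate (p/2) (p/(p-2)) := by
      rw [Real.holderConjugate_iff]
      constructor
      · linarith
      · field_simp; ring
    have hold := Real.inner_le_Lp_mul_Lq (Finset.univ (α := Fin n))
      (fun k => w k ^ 2) (fun _ => (1:ℝ)) hconj
    simp only [mul_one] at hold
    have e1 : ∑ k, |w k ^ 2| ^ (p/2) = Sp := by
      apply Finset.sum_congr rfl; intro k _
      rw [abs_pow, sq_abs, ← sq_abs (w k), ← Real.rpow_natCast |w k| 2,
        ← Real.rpow_mul (abs_nonneg _)]
      congr 1
      push_cast; ring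
    have e2 : ∑ _k : Fin n, |(1:ℝ)| ^ (p/(p-2)) = (n:ℝ) := by simp
    rw [e1, e2] at hold
    have hnp : (0:ℝ) < (n:ℝ) := by exact_mod_cast hn
    have e3 : (1:ℝ) / (p/2) = 2/p := by field_simp
    rw [e3] at hold
    -- hold : ∑ w k ^2 ≤ Sp ^ (2/p) * n ^ (1/(p/(p-2)))
    have h2 : min 1 ((n:ℝ) ^ (2/p - 1)) ≤ (n:ℝ) ^ (2/p - 1) := min_le_right _ _
    have hS2nn : 0 ≤ ∑ k, w k ^ 2 := Finset.sum_nonneg fun k _ => sq_nonneg _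
    have step : (n:ℝ) ^ (2/p - 1) * ∑ k, w k ^ 2 ≤ Sp ^ (2/p) := by
      have := mul_le_mul_of_nonneg_left hold (Real.rpow_nonneg (le_of_lt hnp) (2/p - 1))
      refine le_trans this (le_of_eq ?_)
      rw [mul_comm ((Sp:ℝ) ^ (2/p)) _, ← mul_assoc, ← Real.rpow_add hnp]
      have : 2/p - 1 + 1/(p/(p-2)) = 0 := by field_simp; ring
      rw [this, Real.rpow_zero, one_mul]
    calc min 1 ((n:ℝ) ^ (2/p - 1)) * ∑ k, w k ^ 2
        ≤ (n:ℝ) ^ (2/p - 1) * ∑ k, w k ^ 2 :=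
          mul_le_mul_of_nonneg_right h2 hS2nn
      _ ≤ Sp ^ (2/p) := step

lemma stoch_quad {m : ℕ} {P : Matrix (Fin m) (Fin m) ℝ} (hPsym : P.IsSymm)
    (hPnn : ∀ i j, 0 ≤ P i j) (hProw : ∀ i, ∑ j, P i j = 1)
    (u : Fin m → ℝ) : ∑ i, u i * (∑ j, P i j * u j) ≤ ∑ i, u i ^ 2 := by
  have hcol : ∀ j, ∑ i, P i j = 1 := by
    intro j
    rw [Finset.sum_congr rfl fun i _ => hPsym.apply j i]
    exact hProw j
  have hA : ∀ i, ∑ j, P i j * u i ^ 2 / 2 = u i ^ 2 / 2 := by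
    intro i; rw [← Finset.sum_div, ← Finset.sum_mul, hProw i, one_mul]
  have hB : ∀ j, ∑ i, P i j * u j ^ 2 / 2 = u j ^ 2 / 2 := by
    intro j; rw [← Finset.sum_div, ← Finset.sum_mul, hcol j, one_mul]
  have step1 : ∑ i, u i * (∑ j, P i j * u j) = ∑ i, ∑ j, P i j * (u i * u j) := by
    apply Finset.sum_congr rfl; intro i _
    rw [Finset.mul_sum]; apply Finset.sum_congr rfl; intro j _; ring
  have step2 : ∑ i, ∑ j, P i j * (u i * u j)
      ≤ ∑ i, ∑ j, (P i j * u i ^ 2 / 2 + P i j * u j ^ 2 / 2) := by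
    apply Finset.sum_le_sum; intro i _; apply Finset.sum_le_sum; intro j _
    nlinarith [sq_nonneg (u i - u j), hPnn i j, mul_le_mul_of_nonneg_left
      (by nlinarith [sq_nonneg (u i - u j)] : u i * u j ≤ (u i ^ 2 + u j ^ 2)/2) (hPnn i j)]
  have step3 : ∑ i, ∑ j, (P i j * u i ^ 2 / 2 + P i j * u j ^ 2 / 2) = ∑ i, u i ^ 2 := by
    calc ∑ i, ∑ j, (P i j * u i ^ 2 / 2 + P i j * u j ^ 2 / 2)
        = (∑ i, ∑ j, P i j * u i ^ 2 / 2) + ∑ i, ∑ j, P i j * u j ^ 2 / 2 := by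
          rw [← Finset.sum_add_distrib]
          exact Finset.sum_congr rfl fun i _ => Finset.sum_add_distrib
      _ = (∑ i, u i ^ 2 / 2) + ∑ j, ∑ i, P i j * u j ^ 2 / 2 := by
          rw [Finset.sum_congr rfl fun i _ => hA i, Finset.sum_comm]
      _ = (∑ i, u i ^ 2 / 2) + ∑ j, u j ^ 2 / 2 := by
          rw [Finset.sum_congr rfl fun j (_ : j ∈ Finset.univ) => hB j]
      _ = ∑ i, u i ^ 2 := by
          rw [← Finset.sum_add_distrib]
          exact Finset.sum_congr rfl fun i _ => by ring
  linarith [step1, step2, step3]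

open scoped MatrixOrder in
lemma psd_contract {m : ℕ} {P : Matrix (Fin m) (Fin m) ℝ} (hPsym : P.IsSymm)
    (hPnn : ∀ i j, 0 ≤ P i j) (hProw : ∀ i, ∑ j, P i j = 1) (hPpsd : P.PosSemidef)
    (u : Fin m → ℝ) :
    ∑ i, (∑ j, P i j * u j) ^ 2 ≤ ∑ i, u i * (∑ j, P i j * u j) := by
  classical
  set R := CFC.sqrt P with hRdef
  have hRR : R * R = P := CFC.sqrt_mul_sqrt_self P hPpsd.nonneg
  have hRs : ∀ i j, R i j = R j i := by
    intro i j
    have h := congrFun (congrFun (Matrix.nonneg_iff_posSemidef.mp (CFC.sqrt_nonneg P)).1 i) j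
    exact (by simpa [Matrix.conjTranspose_apply] using h : R j i = R i j).symm
  -- P entries via R
  have hPe : ∀ i j, P i j = ∑ k, R i k * R k j := by
    intro i j; rw [← hRR, Matrix.mul_apply]
  -- P *ᵥ a  =  R *ᵥ (R *ᵥ a)  (as sums)
  have hmul : ∀ (a : Fin m → ℝ) i,
      (∑ j, P i j * a j) = ∑ k, R i k * (∑ j, R k j * a j) := by
    intro a i
    simp_rw [hPe, Finset.sum_mul]
    rw [Finset.sum_comm]
    apply Finset.sum_congr rfl; intro k _
    rw [Finset.mul_sum]; apply Finset.sum_congr rfl; intro j _; ring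
  -- adjoint identity
  have hadj : ∀ (a b : Fin m → ℝ),
      ∑ i, a i * (∑ j, R i j * b j) = ∑ i, (∑ j, R i j * a j) * b i := by
    intro a b
    simp_rw [Finset.mul_sum, Finset.sum_mul]
    rw [Finset.sum_comm]
    apply Finset.sum_congr rfl; intro j _
    apply Finset.sum_congr rfl; intro i _
    rw [hRs j i]; ring
  set v : Fin m → ℝ := fun k => ∑ j, R k j * u j with hv
  have key : ∀ c : Fin m → ℝ, ∑ i, (∑ j, R i j * c j) * (∑ j, R i j * c j)
      = ∑ i, c i * (∑ j, P i j * c j) := by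
    intro c
    have := hadj (fun i => ∑ j, R i j * c j) c
    calc ∑ i, (∑ j, R i j * c j) * (∑ j, R i j * c j)
        = ∑ i, (∑ j, R i j * (∑ l, R j l * c l)) * c i := hadj _ c
      _ = ∑ i, (∑ j, P i j * c j) * c i := by
          apply Finset.sum_congr rfl; intro i _
          rw [← hmul c i]
      _ = ∑ i, c i * (∑ j, P i j * c j) := by
          apply Finset.sum_congr rfl; intro i _; ring
  have lhs_eq : ∑ i, (∑ j, P i j * u j) ^ 2 = ∑ i, v i * (∑ j, P i j * v j) := by
    calc ∑ i, (∑ j, P i j * u j) ^ 2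
        = ∑ i, (∑ j, R i j * v j) * (∑ j, R i j * v j) := by
          apply Finset.sum_congr rfl; intro i _
          rw [hmul u i, sq]
      _ = ∑ i, v i * (∑ j, P i j * v j) := key v
  have rhs_eq : ∑ i, u i * (∑ j, P i j * u j) = ∑ i, v i ^ 2 := by
    calc ∑ i, u i * (∑ j, P i j * u j)
        = ∑ i, u i * (∑ k, R i k * v k) := by
          apply Finset.sum_congr rfl; intro i _; rw [hmul u i]
      _ = ∑ i, (∑ j, R i j * u j) * v i := hadj u v
      _ = ∑ i, v i ^ 2 := by
          apply Finset.sum_congr rfl; intro i _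
          have hvi : (∑ j, R i j * u j) = v i := rfl
          rw [hvi]; ring
  rw [lhs_eq, rhs_eq]
  exact stoch_quad hPsym hPnn hProw v

lemma consensus_scalar {m : ℕ} {P : Matrix (Fin m) (Fin m) ℝ} (hPsym : P.IsSymm)
    (hPnn : ∀ i j, 0 ≤ P i j) (hProw : ∀ i, ∑ j, P i j = 1) (hPpsd : P.PosSemidef)
    (b a : Fin m → ℝ) :
    ∑ i, (a i - ∑ j, P i j * a j) ^ 2 ≤ ∑ i, ∑ j, P i j * (b i - a j) ^ 2 := by
  have hcol : ∀ j, ∑ i, P i j = 1 := by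
    intro j
    rw [Finset.sum_congr rfl fun i _ => hPsym.apply j i]
    exact hProw j
  set c : Fin m → ℝ := fun i => ∑ j, P i j * a j with hc
  have hRHS : ∑ i, ∑ j, P i j * (b i - a j) ^ 2
      = ∑ i, (b i ^ 2 - 2 * (b i * c i)) + ∑ j, a j ^ 2 := by
    have inner : ∀ i, ∑ j, P i j * (b i - a j) ^ 2
        = (b i ^ 2 - 2 * (b i * c i)) + ∑ j, P i j * a j ^ 2 := by
      intro i
      have e : ∀ j, P i j * (b i - a j) ^ 2
          = b i ^ 2 * P i j - 2 * (b i * (P i j * a j)) + P i j * a j ^ 2 := by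
        intro j; ring
      simp_rw [e]
      rw [Finset.sum_add_distrib, Finset.sum_sub_distrib, ← Finset.mul_sum,
        ← Finset.mul_sum, ← Finset.mul_sum, hProw i]
      simp only [hc]
      ring
    rw [Finset.sum_congr rfl fun i _ => inner i, Finset.sum_add_distrib]
    congr 1
    rw [Finset.sum_comm]
    apply Finset.sum_congr rfl; intro j _
    rw [← Finset.sum_mul, hcol j, one_mul]
  have hkey : ∑ i, c i ^ 2 ≤ ∑ i, a i * c i := by
    have := psd_contract hPsym hPnn hProw hPpsd a
    simpa [hc, sq] using this
  have e1 : ∑ i, (a i - c i) ^ 2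
      = ∑ i, a i ^ 2 - 2 * ∑ i, a i * c i + ∑ i, c i ^ 2 := by
    rw [Finset.mul_sum, ← Finset.sum_sub_distrib, ← Finset.sum_add_distrib]
    apply Finset.sum_congr rfl; intro i _; ring
  have e2 : ∑ i, (b i ^ 2 - 2 * (b i * c i)) = ∑ i, (b i - c i) ^ 2 - ∑ i, c i ^ 2 := by
    rw [← Finset.sum_sub_distrib]
    apply Finset.sum_congr rfl; intro i _; ring
  have e3 : 0 ≤ ∑ i, (b i - c i) ^ 2 := Finset.sum_nonneg fun i _ => sq_nonneg _
  calc ∑ i, (a i - c i) ^ 2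
      = ∑ i, a i ^ 2 - 2 * ∑ i, a i * c i + ∑ i, c i ^ 2 := e1
    _ ≤ ∑ i, (b i ^ 2 - 2 * (b i * c i)) + ∑ j, a j ^ 2 := by
        rw [e2]; linarith
    _ = ∑ i, ∑ j, P i j * (b i - a j) ^ 2 := hRHS.symm

lemma norm_sq_eq {n : ℕ} (v : EuclideanSpace ℝ (Fin n)) : ‖v‖ ^ 2 = ∑ k, v k ^ 2 := by
  rw [EuclideanSpace.norm_eq, Real.sq_sqrt (Finset.sum_nonneg fun k _ => sq_nonneg _)]
  exact Finset.sum_congr rfl fun k _ => by rw [Real.norm_eq_abs, sq_abs]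

lemma consensus_vec {n m : ℕ} {P : Matrix (Fin m) (Fin m) ℝ} (hPsym : P.IsSymm)
    (hPnn : ∀ i j, 0 ≤ P i j) (hProw : ∀ i, ∑ j, P i j = 1) (hPpsd : P.PosSemidef)
    (z w : Fin m → EuclideanSpace ℝ (Fin n)) :
    ∑ i, ‖w i - ∑ j, P i j • w j‖ ^ 2 ≤ ∑ i, ∑ j, P i j * ‖z i - w j‖ ^ 2 := by
  have happ : ∀ i k, (w i - ∑ j, P i j • w j) k = w i k - ∑ j, P i j * w j k := by
    intro i k
    have : (∑ j, P i j • w j) k = ∑ j, (P i j • w j) k :=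
      by rw [WithLp.ofLp_sum, Finset.sum_apply]
    simp [this]
  calc ∑ i, ‖w i - ∑ j, P i j • w j‖ ^ 2
      = ∑ i, ∑ k, (w i k - ∑ j, P i j * w j k) ^ 2 := by
        apply Finset.sum_congr rfl; intro i _
        rw [norm_sq_eq]
        exact Finset.sum_congr rfl fun k _ => by rw [happ i k]
    _ = ∑ k, ∑ i, (w i k - ∑ j, P i j * w j k) ^ 2 := Finset.sum_comm
    _ ≤ ∑ k, ∑ i, ∑ j, P i j * (z i k - w j k) ^ 2 := by
        apply Finset.sum_le_sum; intro k _
        exact consensus_scalar hPsym hPnn hProw hPpsd (fun i => z i k) (fun i => w i k)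
    _ = ∑ i, ∑ k, ∑ j, P i j * (z i k - w j k) ^ 2 := Finset.sum_comm
    _ = ∑ i, ∑ j, P i j * ‖z i - w j‖ ^ 2 := by
        apply Finset.sum_congr rfl; intro i _
        rw [Finset.sum_comm]
        apply Finset.sum_congr rfl; intro j _
        rw [norm_sq_eq, Finset.mul_sum]
        apply Finset.sum_congr rfl; intro k _
        have : (z i - w j) k = z i k - w j k := by simp
        rw [this]

lemma sum_inner_swap {n m : ℕ} {P : Matrix (Fin m) (Fin m) ℝ} (hPsym : P.IsSymm)
    (a b : Fin m → EuclideanSpace ℝ (Fin n)) :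
    ∑ i, ⟪∑ j, P i j • a j, b i⟫ = ∑ i, ⟪a i, ∑ j, P i j • b j⟫ := by
  have l : ∀ i : Fin m, ⟪∑ j, P i j • a j, b i⟫ = ∑ j, P i j * ⟪a j, b i⟫ := by
    intro i; rw [sum_inner]
    exact Finset.sum_congr rfl fun j _ => real_inner_smul_left _ _ _
  have rr : ∀ i : Fin m, ⟪a i, ∑ j, P i j • b j⟫ = ∑ j, P i j * ⟪a i, b j⟫ := by
    intro i; rw [inner_sum]
    exact Finset.sum_congr rfl fun j _ => real_inner_smul_right _ _ _
  simp_rw [l, rr]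
  rw [Finset.sum_comm]
  exact Finset.sum_congr rfl fun i _ => Finset.sum_congr rfl fun j _ => by
    rw [hPsym.apply i j, real_inner_comm]

lemma norm_sum_sq_le {n : ℕ} (s : Finset ℕ) (v : ℕ → EuclideanSpace ℝ (Fin n)) :
    ‖∑ t ∈ s, v t‖ ^ 2 ≤ (s.card : ℝ) * ∑ t ∈ s, ‖v t‖ ^ 2 := by
  calc ‖∑ t ∈ s, v t‖ ^ 2 ≤ (∑ t ∈ s, ‖v t‖) ^ 2 := by
        apply pow_le_pow_left₀ (norm_nonneg _) (norm_sum_le s v)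
    _ ≤ (s.card : ℝ) * ∑ t ∈ s, ‖v t‖ ^ 2 := sq_sum_le_card_mul_sum_sq

set_option maxHeartbeats 1000000 in
/-- `O(1/T)` ergodic convergence of the consensus residual for Bregman PDMM. -/
theorem bregman_pdmm_ergodic_residual_rate {n m : ℕ}
    (𝒳 : Set (EuclideanSpace ℝ (Fin n)))
    (hXne : 𝒳.Nonempty) (hXclosed : IsClosed 𝒳) (hXconv : Convex ℝ 𝒳)
    (f : Fin m → EuclideanSpace ℝ (Fin n) → ℝ)
    (hf : ∀ i, ConvexOn ℝ Set.univ (f i))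
    (P : Matrix (Fin m) (Fin m) ℝ) (hPsym : P.IsSymm)
    (hPnn : ∀ i j, 0 ≤ P i j) (hProw : ∀ i, ∑ j, P i j = 1) (hPpsd : P.PosSemidef)
    (φ : EuclideanSpace ℝ (Fin n) → ℝ)
    (hφd : Differentiable ℝ φ) (hφc : ConvexOn ℝ Set.univ φ)
    (φi : Fin m → EuclideanSpace ℝ (Fin n) → ℝ)
    (hφid : ∀ i, Differentiable ℝ (φi i)) (hφic : ∀ i, ConvexOn ℝ Set.univ (φi i))
    (μ p σ ρ τ γ : ℝ) (δ : Fin m → ℝ)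
    (hμ : 0 < μ) (hp : 1 ≤ p)
    (hstrong : ∀ u ∈ 𝒳, ∀ v ∈ 𝒳, μ / 2 * lpnorm p (u - v) ^ 2 ≤ breg φ u v)
    (hσ : σ = min 1 ((n : ℝ) ^ (2 / p - 1)))
    (hρ : 0 < ρ) (hτ : 0 < τ) (hδ : ∀ i, 0 ≤ δ i)
    (hγ0 : 0 < γ) (hγ : γ < μ * σ) (hτρ : τ ≤ ρ * (μ * σ - γ))
    (x y ν : ℕ → Fin m → EuclideanSpace ℝ (Fin n))
    (hxX : ∀ t i, x t i ∈ 𝒳) (hyX : ∀ t i, y t i ∈ 𝒳)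
    (hmirror : ∀ t : ℕ, ∀ i, ∀ u ∈ 𝒳,
      0 ≤ ∑ j, P i j * ⟪gradient φ (y t i) - gradient φ (x t j), u - y t i⟫)
    (hprimal : ∀ t : ℕ, ∀ i, ∃ g : EuclideanSpace ℝ (Fin n),
      (∀ v ∈ 𝒳, 0 ≤ ⟪g, x (t + 1) i - v⟫) ∧
      ∀ v, f i v ≥ f i (x (t + 1) i) +
        ⟪-ν t i + (∑ j, P i j • ν t j)
            - ρ • (gradient φ (x (t + 1) i) - gradient φ (y t i))
            - δ i • (gradient (φi i) (x (t + 1) i) - gradient (φi i) (x t i))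
            - g, v - x (t + 1) i⟫)
    (hdual : ∀ t : ℕ, ∀ i, ν (t + 1) i =
      ν t i + τ • (x (t + 1) i - ∑ j, P i j • x (t + 1) j))
    (xstar : EuclideanSpace ℝ (Fin n)) (hxstar : xstar ∈ 𝒳)
    (νstar : Fin m → EuclideanSpace ℝ (Fin n))
    (hkkt : ∀ i, ∃ g : EuclideanSpace ℝ (Fin n),
      (∀ v ∈ 𝒳, 0 ≤ ⟪g, xstar - v⟫) ∧
      ∀ v, f i v ≥ f i xstar +
        ⟪-νstar i + (∑ j, P i j • νstar j) - g, v - xstar⟫)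
    (T : ℕ) (hT : 1 ≤ T)
    (xbar : Fin m → EuclideanSpace ℝ (Fin n))
    (hxbar : ∀ i, xbar i = (1 / (T : ℝ)) • ∑ t ∈ Finset.Icc 1 T, x t i)
    (V0 : ℝ)
    (hV0 : V0 =
      1 / (2 * τ * ρ) * ∑ i, ‖νstar i - ν 0 i‖ ^ 2
        + (∑ i, breg φ xstar (y 0 i))
        + ∑ i, δ i / ρ * breg (φi i) xstar (x 0 i)) :
    1 / 2 * ∑ i, ‖xbar i - ∑ j, P i j • xbar j‖ ^ 2 ≤ V0 / (γ * T) := by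
  have hσnn : 0 ≤ σ := by
    rw [hσ]
    exact le_min one_pos.le (Real.rpow_nonneg (Nat.cast_nonneg n) _)
  have hμσ : 0 < μ * σ := lt_trans hγ0 hγ
  have hcol : ∀ j, ∑ i, P i j = 1 := by
    intro j
    rw [Finset.sum_congr rfl fun i _ => hPsym.apply j i]
    exact hProw j
  -- strong convexity in the ℓ₂ norm
  have hsc : ∀ u ∈ 𝒳, ∀ v ∈ 𝒳, μ * σ / 2 * ‖u - v‖ ^ 2 ≤ breg φ u v := by
    intro u hu v hv
    have h1 := hstrong u hu v hv
    have h2 := lp_lower hp (u - v)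
    rw [← hσ] at h2
    nlinarith [mul_le_mul_of_nonneg_left h2 (le_of_lt (half_pos hμ))]
  -- the per-step Lyapunov decrease
  have key : ∀ t : ℕ,
      1/(2*τ*ρ) * (∑ i, ‖νstar i - ν (t+1) i‖ ^ 2)
        + (∑ i, breg φ xstar (y (t+1) i))
        + (∑ i, δ i / ρ * breg (φi i) xstar (x (t+1) i))
        + γ/2 * ∑ i, ‖x (t+1) i - ∑ j, P i j • x (t+1) j‖ ^ 2
      ≤ 1/(2*τ*ρ) * (∑ i, ‖νstar i - ν t i‖ ^ 2)
        + (∑ i, breg φ xstar (y t i))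
        + (∑ i, δ i / ρ * breg (φi i) xstar (x t i)) := by
    intro t
    -- abbreviations
    set d : Fin m → EuclideanSpace ℝ (Fin n) := fun i => x (t+1) i - xstar with hd
    set r : Fin m → EuclideanSpace ℝ (Fin n) :=
      fun i => x (t+1) i - ∑ j, P i j • x (t+1) j with hrdef
    -- per-agent primal/KKT combination
    have key_i : ∀ i,
        (⟪ν t i - ∑ j, P i j • ν t j, d i⟫
          - ⟪νstar i - ∑ j, P i j • νstar j, d i⟫)
        + ρ * ⟪gradient φ (x (t+1) i) - gradient φ (y t i), d i⟫
        + δ i * ⟪gradient (φi i) (x (t+1) i) - gradient (φi i) (x t i), d i⟫ ≤ 0 := by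
      intro i
      obtain ⟨g, hgX, hgineq⟩ := hprimal t i
      obtain ⟨gs, hgsX, hgsineq⟩ := hkkt i
      have h1 := hgineq xstar
      have h2 := hgsineq (x (t+1) i)
      have hgd : (0:ℝ) ≤ ⟪g, x (t+1) i - xstar⟫ := hgX xstar hxstar
      have hgsd : (0:ℝ) ≤ ⟪gs, xstar - x (t+1) i⟫ := hgsX (x (t+1) i) (hxX (t+1) i)
      have hsub : xstar - x (t+1) i = -(x (t+1) i - xstar) := by abel
      rw [ge_iff_le, hsub, inner_neg_right] at h1
      rw [ge_iff_le] at h2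
      rw [hsub, inner_neg_right] at hgsd
      simp only [inner_sub_left, inner_add_left, inner_neg_left,
        real_inner_smul_left] at h1 h2 ⊢
      simp only [hd]
      linarith
    -- dual-update norm identity
    have hdid : ∀ i, ‖νstar i - ν (t+1) i‖ ^ 2
        = ‖νstar i - ν t i‖ ^ 2 + 2*τ*⟪ν t i - νstar i, r i⟫ + τ^2 * ‖r i‖ ^ 2 := by
      intro i
      have e : νstar i - ν (t+1) i = (νstar i - ν t i) - τ • (r i) := by
        rw [hdual t i]; simp only [hrdef]; abel
      rw [e, norm_sub_sq_real, real_inner_smul_right, norm_smul]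
      have : ⟪νstar i - ν t i, r i⟫ = -⟪ν t i - νstar i, r i⟫ := by
        rw [show νstar i - ν t i = -(ν t i - νstar i) by abel, inner_neg_left]
      rw [this]
      simp [mul_pow, sq_abs]
      ring
    -- residual identity  d i - ∑ⱼ Pᵢⱼ • d j = r i
    have hIdB : ∀ i, d i - ∑ j, P i j • d j = r i := by
      intro i
      have h1 : ∑ j, P i j • d j = (∑ j, P i j • x (t+1) j) - (∑ j, P i j) • xstar := by
        rw [Finset.sum_smul, ← Finset.sum_sub_distrib]
        exact Finset.sum_congr rfl fun j _ => smul_sub _ _ _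
      simp only [hd, hrdef]
      rw [h1, hProw i, one_smul]
      abel
    -- summed dual term
    have idA : ∑ i, (⟪ν t i - ∑ j, P i j • ν t j, d i⟫
          - ⟪νstar i - ∑ j, P i j • νstar j, d i⟫)
        = ∑ i, ⟪ν t i - νstar i, r i⟫ := by
      have swap1 := sum_inner_swap hPsym (fun j => ν t j) d
      have swap2 := sum_inner_swap hPsym (fun j => νstar j) d
      have expand : ∀ i, ⟪ν t i - ∑ j, P i j • ν t j, d i⟫
            - ⟪νstar i - ∑ j, P i j • νstar j, d i⟫
          = (⟪ν t i, d i⟫ - ⟪νstar i, d i⟫)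
            - (⟪∑ j, P i j • ν t j, d i⟫ - ⟪∑ j, P i j • νstar j, d i⟫) := by
        intro i; simp only [inner_sub_left]; ring
      have expand2 : ∀ i, ⟪ν t i - νstar i, r i⟫
          = (⟪ν t i, d i⟫ - ⟪νstar i, d i⟫)
            - (⟪ν t i, ∑ j, P i j • d j⟫ - ⟪νstar i, ∑ j, P i j • d j⟫) := by
        intro i
        rw [← hIdB i]
        simp only [inner_sub_left, inner_sub_right]
        try ring
      calc ∑ i, (⟪ν t i - ∑ j, P i j • ν t j, d i⟫
              - ⟪νstar i - ∑ j, P i j • νstar j, d i⟫)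
          = ∑ i, ((⟪ν t i, d i⟫ - ⟪νstar i, d i⟫)
              - (⟪∑ j, P i j • ν t j, d i⟫ - ⟪∑ j, P i j • νstar j, d i⟫)) :=
            Finset.sum_congr rfl fun i _ => expand i
        _ = ((∑ i, ⟪ν t i, d i⟫) - ∑ i, ⟪νstar i, d i⟫)
              - ((∑ i, ⟪∑ j, P i j • ν t j, d i⟫) - ∑ i, ⟪∑ j, P i j • νstar j, d i⟫) := by
            rw [Finset.sum_sub_distrib, Finset.sum_sub_distrib, Finset.sum_sub_distrib]
        _ = ((∑ i, ⟪ν t i, d i⟫) - ∑ i, ⟪νstar i, d i⟫)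
              - ((∑ i, ⟪ν t i, ∑ j, P i j • d j⟫) - ∑ i, ⟪νstar i, ∑ j, P i j • d j⟫) := by
            rw [swap1, swap2]
        _ = ∑ i, ((⟪ν t i, d i⟫ - ⟪νstar i, d i⟫)
              - (⟪ν t i, ∑ j, P i j • d j⟫ - ⟪νstar i, ∑ j, P i j • d j⟫)) := by
            rw [← Finset.sum_sub_distrib, ← Finset.sum_sub_distrib, ← Finset.sum_sub_distrib]
        _ = ∑ i, ⟪ν t i - νstar i, r i⟫ :=
            Finset.sum_congr rfl fun i _ => (expand2 i).symm
    -- three-point rewrites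
    have htpφ : ∀ i, ⟪gradient φ (x (t+1) i) - gradient φ (y t i), d i⟫
        = breg φ xstar (x (t+1) i) + breg φ (x (t+1) i) (y t i)
          - breg φ xstar (y t i) := by
      intro i
      have h := breg_three_point φ xstar (x (t+1) i) (y t i)
      have e : ⟪gradient φ (y t i) - gradient φ (x (t+1) i), xstar - x (t+1) i⟫
          = ⟪gradient φ (x (t+1) i) - gradient φ (y t i), d i⟫ := by
        rw [show gradient φ (y t i) - gradient φ (x (t+1) i)
            = -(gradient φ (x (t+1) i) - gradient φ (y t i)) by abel,
          show xstar - x (t+1) i = -(d i) by simp only [hd]; abel, inner_neg_neg]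
      rw [e] at h
      linarith
    have htpφi : ∀ i, ⟪gradient (φi i) (x (t+1) i) - gradient (φi i) (x t i), d i⟫
        = breg (φi i) xstar (x (t+1) i) + breg (φi i) (x (t+1) i) (x t i)
          - breg (φi i) xstar (x t i) := by
      intro i
      have h := breg_three_point (φi i) xstar (x (t+1) i) (x t i)
      have e : ⟪gradient (φi i) (x t i) - gradient (φi i) (x (t+1) i), xstar - x (t+1) i⟫
          = ⟪gradient (φi i) (x (t+1) i) - gradient (φi i) (x t i), d i⟫ := by
        rw [show gradient (φi i) (x t i) - gradient (φi i) (x (t+1) i)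
            = -(gradient (φi i) (x (t+1) i) - gradient (φi i) (x t i)) by abel,
          show xstar - x (t+1) i = -(d i) by simp only [hd]; abel, inner_neg_neg]
      rw [e] at h
      linarith
    -- mirror step at t+1, summed
    have hmirsum : (∑ i, breg φ xstar (y (t+1) i))
          + ∑ i, ∑ j, P i j * breg φ (y (t+1) i) (x (t+1) j)
        ≤ ∑ i, breg φ xstar (x (t+1) i) := by
      have per : ∀ i : Fin m, breg φ xstar (y (t+1) i)
            + ∑ j, P i j * breg φ (y (t+1) i) (x (t+1) j)
          ≤ ∑ j, P i j * breg φ xstar (x (t+1) j) := by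
        intro i
        have hm := hmirror (t+1) i xstar hxstar
        have e : ∀ j : Fin m,
            P i j * ⟪gradient φ (y (t+1) i) - gradient φ (x (t+1) j), xstar - y (t+1) i⟫
            = P i j * breg φ xstar (x (t+1) j) - P i j * breg φ xstar (y (t+1) i)
              - P i j * breg φ (y (t+1) i) (x (t+1) j) := by
          intro j
          have h3 := breg_three_point φ xstar (y (t+1) i) (x (t+1) j)
          have e2 : ⟪gradient φ (y (t+1) i) - gradient φ (x (t+1) j), xstar - y (t+1) i⟫
              = -(breg φ xstar (y (t+1) i) + breg φ (y (t+1) i) (x (t+1) j)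
                  - breg φ xstar (x (t+1) j)) := by
            rw [show gradient φ (y (t+1) i) - gradient φ (x (t+1) j)
                = -(gradient φ (x (t+1) j) - gradient φ (y (t+1) i)) by abel,
              inner_neg_left, ← h3]
          rw [e2]; ring
        rw [Finset.sum_congr rfl fun j _ => e j, Finset.sum_sub_distrib,
          Finset.sum_sub_distrib] at hm
        have e5 : ∑ j, P i j * breg φ xstar (y (t+1) i) = breg φ xstar (y (t+1) i) := by
          rw [← Finset.sum_mul, hProw i, one_mul]
        rw [e5] at hm
        linarith
      have total := Finset.sum_le_sum fun i (_ : i ∈ Finset.univ) => per i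
      rw [Finset.sum_add_distrib] at total
      have e4 : ∑ i, ∑ j, P i j * breg φ xstar (x (t+1) j)
          = ∑ j, breg φ xstar (x (t+1) j) := by
        rw [Finset.sum_comm]
        exact Finset.sum_congr rfl fun j _ => by rw [← Finset.sum_mul, hcol j, one_mul]
      rw [e4] at total
      exact total
    -- residual lower bound via strong convexity
    have hres : μ*σ/2 * (∑ i, ‖r i‖ ^ 2)
        ≤ ∑ i, ∑ j, P i j * breg φ (y (t+1) i) (x (t+1) j) := by
      have h1 := consensus_vec hPsym hPnn hProw hPpsd (y (t+1)) (x (t+1))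
      have h2 : ∑ i, ∑ j, P i j * (μ*σ/2 * ‖y (t+1) i - x (t+1) j‖ ^ 2)
          ≤ ∑ i, ∑ j, P i j * breg φ (y (t+1) i) (x (t+1) j) := by
        apply Finset.sum_le_sum; intro i _; apply Finset.sum_le_sum; intro j _
        exact mul_le_mul_of_nonneg_left
          (hsc (y (t+1) i) (hyX (t+1) i) (x (t+1) j) (hxX (t+1) j)) (hPnn i j)
      calc μ*σ/2 * (∑ i, ‖r i‖ ^ 2)
          ≤ μ*σ/2 * ∑ i, ∑ j, P i j * ‖y (t+1) i - x (t+1) j‖ ^ 2 :=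
            mul_le_mul_of_nonneg_left h1 (by positivity)
        _ = ∑ i, ∑ j, P i j * (μ*σ/2 * ‖y (t+1) i - x (t+1) j‖ ^ 2) := by
            rw [Finset.mul_sum]
            apply Finset.sum_congr rfl; intro i _
            rw [Finset.mul_sum]
            exact Finset.sum_congr rfl fun j _ => by ring
        _ ≤ _ := h2
    -- nonnegativity
    have hb1 : 0 ≤ ∑ i, breg φ (x (t+1) i) (y t i) :=
      Finset.sum_nonneg fun i _ => breg_nonneg hφc hφd _ _
    have hb2 : 0 ≤ ∑ i, δ i * breg (φi i) (x (t+1) i) (x t i) :=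
      Finset.sum_nonneg fun i _ =>
        mul_nonneg (hδ i) (breg_nonneg (hφic i) (hφid i) _ _)
    -- sum the per-agent inequalities
    have hsum0 : (∑ i, (⟪ν t i - ∑ j, P i j • ν t j, d i⟫
          - ⟪νstar i - ∑ j, P i j • νstar j, d i⟫))
        + ρ * (∑ i, ⟪gradient φ (x (t+1) i) - gradient φ (y t i), d i⟫)
        + (∑ i, δ i * ⟪gradient (φi i) (x (t+1) i) - gradient (φi i) (x t i), d i⟫)
        ≤ 0 := by
      have h := Finset.sum_nonpos fun i (_ : i ∈ Finset.univ) => key_i i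
      rw [Finset.sum_add_distrib, Finset.sum_add_distrib, ← Finset.mul_sum] at h
      exact h
    -- scalar abbreviations
    set Nt : ℝ := ∑ i, ‖νstar i - ν t i‖ ^ 2 with hNt
    set Nt1 : ℝ := ∑ i, ‖νstar i - ν (t+1) i‖ ^ 2 with hNt1
    set St1 : ℝ := ∑ i, ‖r i‖ ^ 2 with hSt1
    set Bt : ℝ := ∑ i, breg φ xstar (y t i) with hBt
    set Bt1 : ℝ := ∑ i, breg φ xstar (y (t+1) i) with hBt1
    set BX : ℝ := ∑ i, breg φ xstar (x (t+1) i) with hBX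
    set Q : ℝ := ∑ i, ∑ j, P i j * breg φ (y (t+1) i) (x (t+1) j) with hQ
    set E1 : ℝ := ∑ i, ⟪ν t i - νstar i, r i⟫ with hE1
    set Ct : ℝ := ∑ i, δ i / ρ * breg (φi i) xstar (x t i) with hCt
    set Ct1 : ℝ := ∑ i, δ i / ρ * breg (φi i) xstar (x (t+1) i) with hCt1
    -- dual identity summed
    have hNsum : Nt1 = Nt + 2*τ*E1 + τ^2 * St1 := by
      rw [hNt1, hNt, hSt1, hE1, Finset.sum_congr rfl fun i _ => hdid i,
        Finset.sum_add_distrib, Finset.sum_add_distrib, ← Finset.mul_sum, ← Finset.mul_sum]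
    -- δ sums
    have hD1 : ∑ i, δ i * breg (φi i) xstar (x (t+1) i) = ρ * Ct1 := by
      rw [hCt1, Finset.mul_sum]
      exact Finset.sum_congr rfl fun i _ => by
        field_simp
    have hD0 : ∑ i, δ i * breg (φi i) xstar (x t i) = ρ * Ct := by
      rw [hCt, Finset.mul_sum]
      exact Finset.sum_congr rfl fun i _ => by
        field_simp
    -- rewrite the summed inequality
    have hφsum : ∑ i, ⟪gradient φ (x (t+1) i) - gradient φ (y t i), d i⟫
        = BX + (∑ i, breg φ (x (t+1) i) (y t i)) - Bt := by
      rw [hBX, hBt, Finset.sum_congr rfl fun i _ => htpφ i, Finset.sum_sub_distrib,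
        Finset.sum_add_distrib]
    have hφisum : ∑ i, δ i * ⟪gradient (φi i) (x (t+1) i) - gradient (φi i) (x t i), d i⟫
        = ρ * Ct1 + (∑ i, δ i * breg (φi i) (x (t+1) i) (x t i)) - ρ * Ct := by
      rw [← hD1, ← hD0,
        Finset.sum_congr rfl fun i (_ : i ∈ Finset.univ) =>
          (by rw [htpφi i]; ring :
            δ i * ⟪gradient (φi i) (x (t+1) i) - gradient (φi i) (x t i), d i⟫
            = δ i * breg (φi i) xstar (x (t+1) i)
              + δ i * breg (φi i) (x (t+1) i) (x t i)
              - δ i * breg (φi i) xstar (x t i)),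
        Finset.sum_sub_distrib, Finset.sum_add_distrib]
    rw [idA, hφsum, hφisum] at hsum0
    set W1 : ℝ := ∑ i, breg φ (x (t+1) i) (y t i) with hW1
    set W2 : ℝ := ∑ i, δ i * breg (φi i) (x (t+1) i) (x t i) with hW2
    clear_value Nt Nt1 St1 Bt Bt1 BX Q E1 Ct Ct1 W1 W2
    -- key scalar inequality
    have hgoal' : E1 + τ/2*St1 + ρ*(Bt1 - Bt) + ρ*(Ct1 - Ct) + ρ*γ/2*St1 ≤ 0 := by
      have m3 : ρ*(Bt1 + Q) ≤ ρ*BX := mul_le_mul_of_nonneg_left hmirsum hρ.le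
      have m4 : ρ*(μ*σ/2 * St1) ≤ ρ*Q := mul_le_mul_of_nonneg_left hres hρ.le
      have m5 : 0 ≤ ρ * W1 := mul_nonneg hρ.le hb1
      have hSnn0 : 0 ≤ St1 := hSt1 ▸ Finset.sum_nonneg fun i _ => sq_nonneg _
      have m7 : τ*St1 ≤ (ρ*(μ*σ) - ρ*γ)*St1 := by
        apply mul_le_mul_of_nonneg_right _ hSnn0
        linarith [hτρ]
      linarith [hsum0, m3, m4, m5, m7, hb2]
    -- conclude
    have hSnn : 0 ≤ St1 := hSt1 ▸ Finset.sum_nonneg fun i _ => sq_nonneg _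
    have hfin : 1/(2*τ*ρ) * Nt1 + Bt1 + Ct1 + γ/2 * St1
        - (1/(2*τ*ρ) * Nt + Bt + Ct)
        = (1/ρ) * (E1 + τ/2*St1 + ρ*(Bt1 - Bt) + ρ*(Ct1 - Ct) + ρ*γ/2*St1) := by
      rw [hNsum]
      field_simp
      ring
    have : 1/(2*τ*ρ) * Nt1 + Bt1 + Ct1 + γ/2 * St1
        - (1/(2*τ*ρ) * Nt + Bt + Ct) ≤ 0 := by
      rw [hfin]
      apply mul_nonpos_of_nonneg_of_nonpos (by positivity) hgoal'
    linarith
  -- telescoping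
  set S : ℕ → ℝ := fun s => ∑ i, ‖x s i - ∑ j, P i j • x s j‖ ^ 2 with hS
  set W : ℕ → ℝ := fun s => 1/(2*τ*ρ) * (∑ i, ‖νstar i - ν s i‖ ^ 2)
      + (∑ i, breg φ xstar (y s i)) + (∑ i, δ i / ρ * breg (φi i) xstar (x s i)) with hW
  have keyW : ∀ t : ℕ, W (t+1) + γ/2 * S (t+1) ≤ W t := by
    intro t
    have := key t
    simp only [hW, hS]
    linarith
  have tel : ∀ t : ℕ, W t + γ/2 * ∑ s ∈ Finset.Icc 1 t, S s ≤ W 0 := by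
    intro t
    induction t with
    | zero => simp
    | succ t ih =>
      rw [Finset.sum_Icc_succ_top (Nat.one_le_iff_ne_zero.mpr (Nat.succ_ne_zero t))]
      have := keyW t
      rw [mul_add]
      linarith
  have hWnn : ∀ t, 0 ≤ W t := by
    intro t
    simp only [hW]
    have h1 : 0 ≤ ∑ i, ‖νstar i - ν t i‖ ^ 2 := Finset.sum_nonneg fun i _ => sq_nonneg _
    have h2 : 0 ≤ ∑ i, breg φ xstar (y t i) :=
      Finset.sum_nonneg fun i _ => breg_nonneg hφc hφd _ _
    have h3 : 0 ≤ ∑ i, δ i / ρ * breg (φi i) xstar (x t i) :=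
      Finset.sum_nonneg fun i _ =>
        mul_nonneg (div_nonneg (hδ i) hρ.le) (breg_nonneg (hφic i) (hφid i) _ _)
    positivity
  have hV0W : V0 = W 0 := by rw [hV0]
  -- Jensen step
  have hTpos : (0:ℝ) < (T:ℝ) := by
    have : 0 < T := lt_of_lt_of_le one_pos hT
    exact_mod_cast this
  have hbar : ∀ i, xbar i - ∑ j, P i j • xbar j
      = (1/(T:ℝ)) • ∑ t ∈ Finset.Icc 1 T, (x t i - ∑ j, P i j • x t j) := by
    intro i
    rw [hxbar i]
    have h1 : ∀ j, P i j • xbar j = (1/(T:ℝ)) • ∑ t ∈ Finset.Icc 1 T, P i j • x t j := by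
      intro j
      rw [hxbar j, smul_comm, Finset.smul_sum]
    rw [Finset.sum_congr rfl fun j (_ : j ∈ Finset.univ) => h1 j, ← Finset.smul_sum,
      ← smul_sub]
    congr 1
    rw [Finset.sum_comm, ← Finset.sum_sub_distrib]
  have hjensen : ∀ i, ‖xbar i - ∑ j, P i j • xbar j‖ ^ 2
      ≤ (1/(T:ℝ)) * ∑ t ∈ Finset.Icc 1 T, ‖x t i - ∑ j, P i j • x t j‖ ^ 2 := by
    intro i
    rw [hbar i, norm_smul]
    have hcard' : (Finset.Icc 1 T).card = T := by rw [Nat.card_Icc]; omega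
    have hcard : ((Finset.Icc 1 T).card : ℝ) = (T : ℝ) := by rw [hcard']
    have hns := norm_sum_sq_le (Finset.Icc 1 T) (fun t => x t i - ∑ j, P i j • x t j)
    rw [hcard] at hns
    have habs : ‖(1/(T:ℝ))‖ = 1/(T:ℝ) := by
      rw [Real.norm_eq_abs, abs_of_pos (by positivity)]
    rw [habs, mul_pow]
    calc (1/(T:ℝ))^2 * ‖∑ t ∈ Finset.Icc 1 T, (x t i - ∑ j, P i j • x t j)‖^2
        ≤ (1/(T:ℝ))^2 * ((T:ℝ) * ∑ t ∈ Finset.Icc 1 T,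
            ‖x t i - ∑ j, P i j • x t j‖^2) :=
          mul_le_mul_of_nonneg_left hns (by positivity)
      _ = (1/(T:ℝ)) * ∑ t ∈ Finset.Icc 1 T, ‖x t i - ∑ j, P i j • x t j‖^2 := by
          have hTne : (T:ℝ) ≠ 0 := ne_of_gt hTpos
          field_simp
  have hfinal : ∑ i, ‖xbar i - ∑ j, P i j • xbar j‖ ^ 2
      ≤ (1/(T:ℝ)) * ∑ s ∈ Finset.Icc 1 T, S s := by
    calc ∑ i, ‖xbar i - ∑ j, P i j • xbar j‖ ^ 2
        ≤ ∑ i, (1/(T:ℝ)) * ∑ t ∈ Finset.Icc 1 T, ‖x t i - ∑ j, P i j • x t j‖ ^ 2 :=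
          Finset.sum_le_sum fun i _ => hjensen i
      _ = (1/(T:ℝ)) * ∑ i, ∑ t ∈ Finset.Icc 1 T, ‖x t i - ∑ j, P i j • x t j‖ ^ 2 := by
          rw [Finset.mul_sum]
      _ = (1/(T:ℝ)) * ∑ s ∈ Finset.Icc 1 T, S s := by
          rw [Finset.sum_comm]
  clear_value S W
  have hsumS : γ/2 * ∑ s ∈ Finset.Icc 1 T, S s ≤ V0 := by
    have := tel T
    rw [hV0W]
    linarith [hWnn T]
  have h2V : ∑ s ∈ Finset.Icc 1 T, S s ≤ 2/γ * V0 := by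
    rw [div_mul_eq_mul_div, le_div_iff₀ hγ0]
    linarith
  calc 1 / 2 * ∑ i, ‖xbar i - ∑ j, P i j • xbar j‖ ^ 2
      ≤ 1/2 * ((1/(T:ℝ)) * ∑ s ∈ Finset.Icc 1 T, S s) := by linarith
    _ ≤ 1/2 * ((1/(T:ℝ)) * (2/γ * V0)) := by
        have := mul_le_mul_of_nonneg_left h2V (le_of_lt (by positivity : (0:ℝ) < 1/(T:ℝ)))
        linarith
    _ = V0 / (γ * T) := by
        have hTne : (T:ℝ) ≠ 0 := ne_of_gt hTpos
        have hγne : γ ≠ 0 := ne_of_gt hγ0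
        rw [eq_div_iff (mul_ne_zero hγne hTne)]
        field_simp
        try ring
        try tauto
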